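/- arXiv:1512.07500 — 3 statements merged into one kernel-verified Lean document; each statement's English description precedes it below -/
import Mathlib

section
/- If k is a complex number with Im k > 0, x₁ > 0, x₂ > 0, and y, z are real, then ∫_{-∞}^{∞} G(x₁, y - y')·G(x₂, y' - z) dy' = G(x₁ + x₂, y - z) (the Chapman–Kolmogorov / semigroup property of the parabolic Green's function). -/
open MeasureTheory

/-- The parabolic Green's function `G(x,y) = sqrt(k/(2πix)) · exp(i k y² / (2x))`,
where the square root is the principal branch of the complex square root. -/
noncomputable def parabolicG (k : ℂ) (x y : ℝ) : ℂ :=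
  (k / (2 * (Real.pi : ℂ) * Complex.I * (x : ℂ))) ^ ((1 : ℂ) / 2) *
    Complex.exp (Complex.I * k * (y : ℂ) ^ 2 / (2 * (x : ℂ)))

lemma mul_cpow_half {a b : ℂ} (ha : a ≠ 0) (hb : b ≠ 0)
    (h : a.arg + b.arg ∈ Set.Ioc (-Real.pi) Real.pi) :
    (a * b) ^ ((1 : ℂ)/2) = a ^ ((1 : ℂ)/2) * b ^ ((1 : ℂ)/2) := by
  rw [Complex.cpow_def_of_ne_zero (mul_ne_zero ha hb), Complex.cpow_def_of_ne_zero ha,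
    Complex.cpow_def_of_ne_zero hb, ← Complex.exp_add,
    (Complex.log_mul_eq_add_log_iff ha hb).mpr h, add_mul]

lemma ofReal_mul_cpow_half (r : ℝ) (hr : 0 ≤ r) (w : ℂ) :
    ((r : ℂ) * w) ^ ((1 : ℂ)/2) = (r : ℂ) ^ ((1 : ℂ)/2) * w ^ ((1 : ℂ)/2) := by
  rcases eq_or_lt_of_le hr with h0 | hpos
  · simp [← h0, Complex.zero_cpow (by norm_num : ((1:ℂ)/2) ≠ 0)]
  rcases eq_or_ne w 0 with rfl | hw
  · simp [Complex.zero_cpow (by norm_num : ((1:ℂ)/2) ≠ 0)]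
  exact mul_cpow_half (by exact_mod_cast hpos.ne') hw
    (by rw [Complex.arg_ofReal_of_nonneg hr, zero_add]
        exact ⟨Complex.neg_pi_lt_arg w, Complex.arg_le_pi w⟩)


/-- Chapman–Kolmogorov / semigroup property of the parabolic Green's function:
if `Im k > 0`, `x₁ > 0`, `x₂ > 0` and `y, z` are real, then
`∫_{-∞}^{∞} G(x₁, y - y')·G(x₂, y' - z) dy' = G(x₁ + x₂, y - z)`. -/
theorem parabolicG_chapman_kolmogorov (k : ℂ) (hk : 0 < k.im)
    (x₁ x₂ : ℝ) (hx₁ : 0 < x₁) (hx₂ : 0 < x₂) (y z : ℝ) :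
    ∫ y' : ℝ, parabolicG k x₁ (y - y') * parabolicG k x₂ (y' - z)
      = parabolicG k (x₁ + x₂) (y - z) := by
  have hπ := Real.pi_pos
  have hk0 : k ≠ 0 := fun h => by simp [h] at hk
  have hs : (0:ℝ) < x₁ + x₂ := by linarith
  set κ : ℂ := -(Complex.I * k) with hκdef
  have hκre : 0 < κ.re := by
    simp only [hκdef, Complex.neg_re, Complex.mul_re, Complex.I_re, Complex.I_im]
    simpa using hk
  have hκ0 : κ ≠ 0 := fun h => by rw [h] at hκre; simp at hκre
  have hκarg : κ.arg ≠ Real.pi := by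
    intro h
    have := Complex.arg_eq_pi_iff.mp h
    linarith [this.1]
  set r : ℝ := (x₁ + x₂)/(2*x₁*x₂) with hrdef
  have hrpos : 0 < r := by positivity
  set b : ℂ := Complex.I * k * ((x₁:ℂ) + x₂) / (2 * x₁ * x₂) with hbdef
  have hbκ : b = -(κ * (r:ℂ)) := by rw [hbdef, hκdef, hrdef]; push_cast; ring
  have hbre : b.re < 0 := by
    rw [hbκ]
    simp only [Complex.neg_re, Complex.mul_re, Complex.ofReal_re, Complex.ofReal_im]
    simp only [mul_zero, sub_zero, neg_neg]
    nlinarith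
  have hb0 : b ≠ 0 := fun h => by rw [h] at hbre; simp at hbre
  set cc : ℂ := -(Complex.I * k) * ((y:ℂ)/x₁ + (z:ℂ)/x₂) with hccdef
  set d : ℂ := Complex.I * k * ((y:ℂ)^2/(2*x₁) + (z:ℂ)^2/(2*x₂)) with hddef
  have key : ∀ y' : ℝ, parabolicG k x₁ (y - y') * parabolicG k x₂ (y' - z)
      = ((k / (2 * (Real.pi:ℂ) * Complex.I * (x₁:ℂ))) ^ ((1:ℂ)/2) *
         (k / (2 * (Real.pi:ℂ) * Complex.I * (x₂:ℂ))) ^ ((1:ℂ)/2)) *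
        Complex.exp (b * (y':ℂ)^2 + cc * (y':ℂ) + d) := by
    intro y'
    unfold parabolicG
    rw [mul_mul_mul_comm, ← Complex.exp_add]
    congr 1
    congr 1
    have hre : ((y-y')^2/(2*x₁) + (y'-z)^2/(2*x₂) : ℝ) =
        ((x₁+x₂)/(2*x₁*x₂))*y'^2 + (-(y/x₁+z/x₂))*y' + (y^2/(2*x₁)+z^2/(2*x₂)) := by
      field_simp
      ring
    calc Complex.I * k * (((y - y' : ℝ)):ℂ)^2 / (2*(x₁:ℂ)) + Complex.I * k * (((y' - z : ℝ)):ℂ)^2 / (2*(x₂:ℂ))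
        = Complex.I * k * (((y-y')^2/(2*x₁) + (y'-z)^2/(2*x₂) : ℝ) : ℂ) := by push_cast; ring
      _ = Complex.I * k * ((((x₁+x₂)/(2*x₁*x₂))*y'^2 + (-(y/x₁+z/x₂))*y'
            + (y^2/(2*x₁)+z^2/(2*x₂)) : ℝ) : ℂ) := by rw [hre]
      _ = b * (y':ℂ)^2 + cc * (y':ℂ) + d := by
            rw [hbdef, hccdef, hddef]; push_cast; ring
  simp_rw [key]
  rw [MeasureTheory.integral_const_mul, integral_cexp_quadratic hbre]
  -- exponential part
  have hexp : d - cc^2/(4*b) = Complex.I * k * ((y - z : ℝ):ℂ)^2 / (2 * ((x₁+x₂:ℝ):ℂ)) := by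
    have hx₁' : (x₁:ℂ) ≠ 0 := by exact_mod_cast hx₁.ne'
    have hx₂' : (x₂:ℂ) ≠ 0 := by exact_mod_cast hx₂.ne'
    have hs' : (x₁:ℂ) + x₂ ≠ 0 := by exact_mod_cast hs.ne'
    have hb0' : b ≠ 0 := fun h => by rw [h] at hbre; simp at hbre
    have h4b : (4:ℂ) * b ≠ 0 := mul_ne_zero (by norm_num) hb0'
    have hre2 : ((y/x₁+z/x₂)^2 : ℝ) =
        (y^2/(2*x₁)+z^2/(2*x₂) - (y-z)^2/(2*(x₁+x₂))) * (4*((x₁+x₂)/(2*x₁*x₂))) := by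
      field_simp
      ring
    have hsq : cc^2 = (d - Complex.I * k * ((y - z : ℝ):ℂ)^2 / (2 * ((x₁+x₂:ℝ):ℂ))) * (4*b) := by
      calc cc^2 = (Complex.I * k)^2 * (((y/x₁+z/x₂)^2 : ℝ) : ℂ) := by
              rw [hccdef]; push_cast; ring
        _ = (Complex.I * k)^2 * (((y^2/(2*x₁)+z^2/(2*x₂) - (y-z)^2/(2*(x₁+x₂)))
              * (4*((x₁+x₂)/(2*x₁*x₂))) : ℝ) : ℂ) := by rw [hre2]
        _ = (d - Complex.I * k * ((y - z : ℝ):ℂ)^2 / (2 * ((x₁+x₂:ℝ):ℂ))) * (4*b) := by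
              rw [hbdef, hddef]; push_cast; ring
    rw [hsq, mul_div_assoc, div_self h4b, mul_one]
    ring
  -- prefactor rewriting
  have hA : ∀ x : ℝ, 0 < x → (k / (2*(Real.pi:ℂ)*Complex.I*(x:ℂ))) ^ ((1:ℂ)/2)
      = ((((2*Real.pi*x)⁻¹ : ℝ)):ℂ) ^ ((1:ℂ)/2) * κ ^ ((1:ℂ)/2) := by
    intro x hx
    rw [show k / (2*(Real.pi:ℂ)*Complex.I*(x:ℂ)) = ((((2*Real.pi*x)⁻¹ : ℝ)):ℂ) * κ by
        rw [hκdef]; push_cast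
        have hx' : (x:ℂ) ≠ 0 := by exact_mod_cast hx.ne'
        have hπ' : (Real.pi:ℂ) ≠ 0 := by exact_mod_cast hπ.ne'
        field_simp
        ring_nf
        rw [Complex.I_sq]
        ring]
    exact ofReal_mul_cpow_half _ (by positivity) κ
  have hπb : ((Real.pi:ℂ)) / (-b) = (((Real.pi/r) : ℝ):ℂ) * κ⁻¹ := by
    have h1 : -b = κ * (r:ℂ) := by rw [hbκ]; ring
    rw [h1]
    push_cast
    have hr' : (r:ℂ) ≠ 0 := by exact_mod_cast hrpos.ne'
    field_simp [hκ0, hr']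
  rw [hexp, hπb, ofReal_mul_cpow_half _ (by positivity) κ⁻¹, Complex.inv_cpow κ _ hκarg,
    hA x₁ hx₁, hA x₂ hx₂]
  unfold parabolicG
  rw [hA (x₁ + x₂) hs]
  have hcpow0 : κ ^ ((1:ℂ)/2) ≠ 0 := by
    rw [Ne, Complex.cpow_eq_zero_iff]
    tauto
  have hreal : ((((2*Real.pi*x₁)⁻¹ : ℝ)):ℂ) ^ ((1:ℂ)/2) * ((((2*Real.pi*x₂)⁻¹ : ℝ)):ℂ) ^ ((1:ℂ)/2)
      * (((Real.pi/r : ℝ)):ℂ) ^ ((1:ℂ)/2)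
      = ((((2*Real.pi*(x₁+x₂))⁻¹ : ℝ)):ℂ) ^ ((1:ℂ)/2) := by
    rw [← Complex.mul_cpow_ofReal_nonneg (by positivity) (by positivity),
        ← Complex.ofReal_mul, ← Complex.mul_cpow_ofReal_nonneg (by positivity) (by positivity),
        ← Complex.ofReal_mul]
    congr 2
    rw [hrdef]
    field_simp
  calc ((((2*Real.pi*x₁)⁻¹ : ℝ)):ℂ) ^ ((1:ℂ)/2) * κ ^ ((1:ℂ)/2) *
        (((((2*Real.pi*x₂)⁻¹ : ℝ)):ℂ) ^ ((1:ℂ)/2) * κ ^ ((1:ℂ)/2)) *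
        ((((Real.pi/r : ℝ)):ℂ) ^ ((1:ℂ)/2) * (κ ^ ((1:ℂ)/2))⁻¹ *
          Complex.exp (Complex.I * k * (((y - z : ℝ)):ℂ)^2 / (2 * (((x₁ + x₂ : ℝ)):ℂ))))
      = (((((2*Real.pi*x₁)⁻¹ : ℝ)):ℂ) ^ ((1:ℂ)/2) * ((((2*Real.pi*x₂)⁻¹ : ℝ)):ℂ) ^ ((1:ℂ)/2)
          * (((Real.pi/r : ℝ)):ℂ) ^ ((1:ℂ)/2)) *
        (κ ^ ((1:ℂ)/2) * (κ ^ ((1:ℂ)/2) * (κ ^ ((1:ℂ)/2))⁻¹)) *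
          Complex.exp (Complex.I * k * (((y - z : ℝ)):ℂ)^2 / (2 * (((x₁ + x₂ : ℝ)):ℂ))) := by ring
    _ = ((((2*Real.pi*(x₁+x₂))⁻¹ : ℝ)):ℂ) ^ ((1:ℂ)/2) * κ ^ ((1:ℂ)/2) *
          Complex.exp (Complex.I * k * (((y - z : ℝ)):ℂ)^2 / (2 * (((x₁ + x₂ : ℝ)):ℂ))) := by
        rw [mul_inv_cancel₀ hcpow0, mul_one, hreal]
end

section
/- Let k be a complex number with Im k > 0, let X > 0, and let ψ, y be real. Then ∫_{-∞}^{∞} exp(ikψ y')·G(X, y - y') dy' = exp(-ikXψ²/2 + ikψ y); that is, convolution with the parabolic Green's function propagates the plane wave exp(ikψ y) over distance X into the plane wave exp(-ikXψ²/2 + ikψ y). -/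
open MeasureTheory

/-- If `Im k > 0`, `X > 0` and `ψ, y` are real, then
`∫_{-∞}^{∞} exp(ikψy')·G(X, y - y') dy' = exp(-ikXψ²/2 + ikψy)`:
convolution with the parabolic Green's function propagates the plane wave `exp(ikψy)`
over a distance `X` into the plane wave `exp(-ikXψ²/2 + ikψy)`. -/
theorem parabolicG_propagates_plane_wave (k : ℂ) (hk : 0 < k.im)
    (X : ℝ) (hX : 0 < X) (ψ y : ℝ) :
    ∫ y' : ℝ, Complex.exp (Complex.I * k * (ψ : ℂ) * (y' : ℂ)) * parabolicG k X (y - y')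
      = Complex.exp (-(Complex.I * k * (X : ℂ) * (ψ : ℂ) ^ 2 / 2)
          + Complex.I * k * (ψ : ℂ) * (y : ℂ)) := by
  have hk0 : k ≠ 0 := fun h => by simp [h] at hk
  have hX0 : (X : ℂ) ≠ 0 := by exact_mod_cast hX.ne'
  have hπ : (Real.pi : ℂ) ≠ 0 := by exact_mod_cast Real.pi_ne_zero
  set a : ℂ := k / (2 * (Real.pi : ℂ) * Complex.I * (X : ℂ)) with ha
  set b : ℂ := Complex.I * k / (2 * (X : ℂ)) with hbdef
  set c : ℂ := Complex.I * k * ψ - Complex.I * k * y / X with hcdef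
  set d : ℂ := Complex.I * k * (y : ℂ) ^ 2 / (2 * (X : ℂ)) with hddef
  have hb : b.re < 0 := by
    have : b = ((Complex.I * k) * ((2 * X)⁻¹ : ℝ)) := by
      rw [hbdef]; push_cast; field_simp
    rw [this, Complex.mul_re]
    simp only [Complex.ofReal_re, Complex.ofReal_im, mul_zero, sub_zero, Complex.mul_re,
      Complex.I_re, Complex.I_im, zero_mul, one_mul, zero_sub]
    have h2X : (0:ℝ) < (2 * X)⁻¹ := by positivity
    nlinarith
  have key : (∫ y' : ℝ, Complex.exp (Complex.I * k * (ψ : ℂ) * (y' : ℂ)) * parabolicG k X (y - y'))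
      = a ^ ((1:ℂ)/2) * ∫ y' : ℝ, Complex.exp (b * (y':ℂ) ^ 2 + c * y' + d) := by
    rw [← integral_const_mul]
    congr 1
    ext y'
    rw [parabolicG, ← ha]
    rw [mul_comm (Complex.exp _), mul_assoc, ← Complex.exp_add]
    congr 2
    push_cast
    rw [hbdef, hcdef, hddef]
    field_simp
    ring
  rw [key, integral_cexp_quadratic hb]
  have hainv : (Real.pi : ℂ) / (-b) = a⁻¹ := by
    rw [hbdef, ha]
    field_simp
    ring_nf
    simp [Complex.I_sq]
  have hare : 0 < a.re := by
    have : a = (k * (-Complex.I)) * ((2 * Real.pi * X)⁻¹ : ℝ) := by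
      rw [ha]; push_cast
      field_simp
      ring_nf
      simp [Complex.I_sq]
    rw [this, Complex.mul_re]
    simp only [Complex.ofReal_re, Complex.ofReal_im, mul_zero, sub_zero, Complex.mul_re,
      Complex.mul_im, Complex.neg_re, Complex.neg_im, Complex.I_re, Complex.I_im]
    have : (0:ℝ) < (2 * Real.pi * X)⁻¹ := by positivity
    nlinarith
  have ha0 : a ≠ 0 := fun h => by simp [h] at hare
  have harg : a.arg ≠ Real.pi := by
    intro h
    rw [Complex.arg_eq_pi_iff] at h
    linarith [h.1]
  rw [hainv, Complex.inv_cpow a _ harg, ← mul_assoc, mul_inv_cancel₀, one_mul]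
  · congr 1
    rw [hddef, hcdef, hbdef]
    field_simp
    ring
  · simp [Complex.cpow_eq_zero_iff, ha0]
end

section
/- (Strength of the monopole scatterer h_D.) Let k be a complex number with Im k > 0 and let q > 0. Then 4·∫_0^{∞} ∫_0^{∞} G(q, y + y') dy' dy = 2·sqrt(2iq/(πk)), where the square root on the right is the principal branch; equivalently, h_D := −4·∫_0^{∞} ∫_0^{∞} G(q, y + y') dy' dy = −2·sqrt(2iq/(πk)). -/
open MeasureTheory

section MonopoleAuxSection

open MeasureTheory Set Filter Complex Topology

open MeasureTheory Set Filter Complex Topology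

namespace MonopoleAux

lemma re_cpow_half_pos {z : ℂ} (hz : 0 < z.re) : 0 < (z ^ ((1 : ℂ)/2)).re := by
  have hz0 : z ≠ 0 := fun h => by simp [h] at hz
  rw [Complex.cpow_def_of_ne_zero hz0, Complex.exp_re]
  have harg : |z.arg| < Real.pi / 2 := Complex.abs_arg_lt_pi_div_two_iff.mpr (Or.inl hz)
  have him : (Complex.log z * ((1 : ℂ)/2)).im = z.arg / 2 := by
    simp [Complex.mul_im, Complex.log_im]
    ring
  rw [him]
  have hπ := Real.pi_pos
  have hcos : 0 < Real.cos (z.arg / 2) := by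
    apply Real.cos_pos_of_mem_Ioo
    constructor
    · have := (abs_lt.mp harg).1; linarith
    · have := (abs_lt.mp harg).2; linarith
  positivity

lemma integral_exp_neg_mul_Ioi' {c : ℝ} (hc : 0 < c) (y : ℝ) :
    ∫ u in Ioi y, Real.exp (-c * u) = Real.exp (-c * y) / c := by
  have hderiv : ∀ x ∈ Ici y, HasDerivAt (fun u : ℝ => -(Real.exp (-c * u) / c))
      (Real.exp (-c * x)) x := by
    intro x _
    have h1 : HasDerivAt (fun u : ℝ => -c * u) (-c) x := by
      simpa using (hasDerivAt_id x).const_mul (-c)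
    have h2 := (h1.exp.div_const c).neg
    have h3 : -(Real.exp (-c * x) * -c / c) = Real.exp (-c * x) := by
      field_simp
    rw [← h3]
    exact h2
  have htend : Tendsto (fun u : ℝ => -(Real.exp (-c * u) / c)) atTop (𝓝 0) := by
    have h0 : Tendsto (fun u : ℝ => -c * u) atTop atBot :=
      tendsto_id.const_mul_atTop_of_neg (neg_lt_zero.2 hc)
    have h1 : Tendsto (fun u : ℝ => Real.exp (-c * u)) atTop (𝓝 0) :=
      Real.tendsto_exp_atBot.comp h0
    simpa using (h1.div_const c).neg
  have := integral_Ioi_of_hasDerivAt_of_tendsto' hderiv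
    (exp_neg_integrableOn_Ioi y hc) htend
  rw [this]
  field_simp
  ring

lemma gauss_tail {a : ℂ} (ha : 0 < a.re) :
    ∫ y in Ioi (0:ℝ), (∫ u in Ioi y, Complex.exp (-a * (u:ℂ)^2)) = (2*a)⁻¹ := by
  have ha0 : a ≠ 0 := fun h => by simp [h] at ha
  set c : ℝ := a.re with hc
  set f : ℝ → ℂ := fun u => Complex.exp (-a * (u:ℂ)^2) with hf
  have hf_cont : Continuous f := by fun_prop
  have hf_int : Integrable f := integrable_cexp_neg_mul_sq ha
  set F : ℝ → ℂ := fun y => ∫ u in Ioi y, f u with hF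
  -- pointwise norm bound
  have hnorm : ∀ u : ℝ, ‖f u‖ ≤ Real.exp c * Real.exp (-c * u) := by
    intro u
    rw [hf, norm_cexp_neg_mul_sq, ← Real.exp_add]
    apply Real.exp_le_exp.2
    nlinarith [sq_nonneg (u - 1), ha]
  -- bound on F
  have hFbound : ∀ y : ℝ, ‖F y‖ ≤ (Real.exp c / c) * Real.exp (-c * y) := by
    intro y
    have h1 : ‖F y‖ ≤ ∫ u in Ioi y, ‖f u‖ := norm_integral_le_integral_norm _
    have h2 : ∫ u in Ioi y, ‖f u‖ ≤ ∫ u in Ioi y, Real.exp c * Real.exp (-c * u) := by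
      apply setIntegral_mono_on (hf_int.norm.integrableOn)
        ((exp_neg_integrableOn_Ioi y ha).const_mul _) measurableSet_Ioi
      intro u _
      exact hnorm u
    have h3 : ∫ u in Ioi y, Real.exp c * Real.exp (-c * u)
        = Real.exp c * (Real.exp (-c * y) / c) := by
      rw [integral_const_mul, integral_exp_neg_mul_Ioi' ha y]
    calc ‖F y‖ ≤ _ := h1
      _ ≤ _ := h2
      _ = (Real.exp c / c) * Real.exp (-c * y) := by rw [h3]; ring
  -- derivative of F
  have hFeq : ∀ y : ℝ, F y = F 0 - ∫ t in (0:ℝ)..y, f t := by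
    intro y
    have e1 : (∫ u in Iic y, f u) + F y = ∫ u, f u := by
      rw [hF]; simpa using integral_add_compl measurableSet_Iic hf_int
    have e2 : (∫ u in Iic (0:ℝ), f u) + F 0 = ∫ u, f u := by
      rw [hF]; simpa using integral_add_compl measurableSet_Iic hf_int
    have e3 := intervalIntegral.integral_Iic_sub_Iic (hf_int.integrableOn)
      (hf_int.integrableOn) (a := (0:ℝ)) (b := y)
    linear_combination e1 - e2 - e3
  have hF_deriv : ∀ y : ℝ, HasDerivAt F (-f y) y := by
    intro y
    have h1 : HasDerivAt (fun y : ℝ => ∫ t in (0:ℝ)..y, f t) (f y) y :=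
      intervalIntegral.integral_hasDerivAt_right (hf_int.intervalIntegrable)
        (hf_cont.stronglyMeasurable.stronglyMeasurableAtFilter) hf_cont.continuousAt
    have h2 := (hasDerivAt_const y (F 0)).sub h1
    have : F = fun y => F 0 - ∫ t in (0:ℝ)..y, f t := funext hFeq
    rw [this]
    exact h2.congr_deriv (zero_sub _)
  -- antiderivative Ψ
  set Ψ : ℝ → ℂ := fun y => (y:ℂ) * F y - Complex.exp (-a * (y:ℂ)^2) / (2*a) with hΨ
  have hΨ_deriv : ∀ y : ℝ, HasDerivAt Ψ (F y) y := by
    intro y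
    have hy1 : HasDerivAt (fun t : ℝ => (t:ℂ)) 1 y := by
      exact Complex.ofRealCLM.hasDerivAt (x := y)
    have hmul := hy1.mul (hF_deriv y)
    have hg : HasDerivAt (fun z : ℂ => Complex.exp (-a * z^2))
        (Complex.exp (-a * (y:ℂ)^2) * (-a * (2*(y:ℂ)))) (y:ℂ) := by
      have h1 : HasDerivAt (fun z : ℂ => -a * z^2) (-a * (2*(y:ℂ))) (y:ℂ) := by
        simpa using (hasDerivAt_pow 2 ((y:ℂ))).const_mul (-a)
      exact h1.cexp
    have hexp := (hg.comp_ofReal).div_const (2*a)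
    have h := hmul.sub hexp
    exact h.congr_deriv (by rw [hf]; field_simp; ring)
  -- tendsto
  have texp : Tendsto (fun y : ℝ => Real.exp (-c * y)) atTop (𝓝 0) :=
    Real.tendsto_exp_atBot.comp (tendsto_id.const_mul_atTop_of_neg (neg_lt_zero.2 ha))
  have t1 : Tendsto (fun y : ℝ => (y:ℂ) * F y) atTop (𝓝 0) := by
    apply squeeze_zero_norm' (a := fun y : ℝ => (Real.exp c / c) * (y * Real.exp (-c * y)))
    · filter_upwards [eventually_ge_atTop (0:ℝ)] with y hy
      have hnn : ‖(y:ℂ) * F y‖ = y * ‖F y‖ := by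
        rw [norm_mul, Complex.norm_real, Real.norm_eq_abs, _root_.abs_of_nonneg hy]
      rw [hnn]
      calc y * ‖F y‖ ≤ y * ((Real.exp c / c) * Real.exp (-c * y)) :=
            mul_le_mul_of_nonneg_left (hFbound y) hy
        _ = (Real.exp c / c) * (y * Real.exp (-c * y)) := by ring
    · have h0 : Tendsto (fun y : ℝ => y * Real.exp (-c * y)) atTop (𝓝 0) := by
        have := tendsto_rpow_mul_exp_neg_mul_atTop_nhds_zero 1 c ha
        apply this.congr'
        filter_upwards [eventually_gt_atTop (0:ℝ)] with y hy
        rw [Real.rpow_one]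
      simpa using h0.const_mul (Real.exp c / c)
  have t2 : Tendsto (fun y : ℝ => Complex.exp (-a * (y:ℂ)^2) / (2*a)) atTop (𝓝 0) := by
    apply squeeze_zero_norm' (a := fun y : ℝ => (Real.exp c / ‖(2*a : ℂ)‖) * Real.exp (-c * y))
    · filter_upwards with y
      rw [norm_div]
      have h2a : (0:ℝ) < ‖(2*a : ℂ)‖ :=
        norm_pos_iff.mpr (mul_ne_zero two_ne_zero ha0)
      calc ‖Complex.exp (-a * (y:ℂ)^2)‖ / ‖(2*a:ℂ)‖
          ≤ (Real.exp c * Real.exp (-c*y)) / ‖(2*a:ℂ)‖ :=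
            (div_le_div_iff_of_pos_right h2a).mpr (hnorm y)
        _ = (Real.exp c / ‖(2*a:ℂ)‖) * Real.exp (-c*y) := by ring
    · simpa using texp.const_mul (Real.exp c / ‖(2*a : ℂ)‖)
  have hΨ_tendsto : Tendsto Ψ atTop (𝓝 0) := by
    rw [hΨ]
    simpa using t1.sub t2
  -- integrability of F
  have hF_cont : Continuous F :=
    continuous_iff_continuousAt.mpr fun y => (hF_deriv y).continuousAt
  have hF_int : IntegrableOn F (Ioi (0:ℝ)) := by
    apply Integrable.mono' (g := fun y : ℝ => (Real.exp c / c) * Real.exp (-c * y))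
      ((exp_neg_integrableOn_Ioi 0 ha).const_mul _)
      (hF_cont.aestronglyMeasurable.restrict)
    exact ae_of_all _ fun y => hFbound y
  have hkey := integral_Ioi_of_hasDerivAt_of_tendsto' (fun x _ => hΨ_deriv x) hF_int hΨ_tendsto
  have hΨ0 : (0:ℂ) - Ψ 0 = (2*a)⁻¹ := by
    simp [hΨ]
  exact hkey.trans hΨ0

lemma shift_integral (g : ℝ → ℂ) (y : ℝ) :
    ∫ y' in Ioi (0:ℝ), g (y + y') = ∫ u in Ioi y, g u := by
  rw [← integral_indicator measurableSet_Ioi, ← integral_indicator measurableSet_Ioi]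
  have : ∀ x : ℝ, indicator (Ioi (0:ℝ)) (fun y' => g (y + y')) x
      = indicator (Ioi y) g (y + x) := by
    intro x
    by_cases h : x ∈ Ioi (0:ℝ)
    · rw [indicator_of_mem h, indicator_of_mem (show y + x ∈ Ioi y by simp at h ⊢; linarith)]
    · rw [indicator_of_notMem h, indicator_of_notMem (show y + x ∉ Ioi y by simp at h ⊢; linarith)]
  simp_rw [this]
  exact integral_add_left_eq_self (indicator (Ioi y) g) y

end MonopoleAux

open Set Filter Complex Topology MonopoleAux in
/-- Strength of the monopole scatterer `h_D`: for `Im k > 0` and `q > 0`,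
`4·∫_0^∞∫_0^∞ G(q, y+y') dy' dy = 2·sqrt(2iq/(πk))`, equivalently
`h_D = −4·∫_0^∞∫_0^∞ G(q, y+y') dy' dy = −2·sqrt(2iq/(πk))`. -/
theorem monopole_strength_hD (k : ℂ) (hk : 0 < k.im) (q : ℝ) (hq : 0 < q) :
    4 * (∫ y in Set.Ioi (0 : ℝ), ∫ y' in Set.Ioi (0 : ℝ), parabolicG k q (y + y'))
      = 2 * (2 * Complex.I * (q : ℂ) / ((Real.pi : ℂ) * k)) ^ ((1 : ℂ) / 2)
    ∧ -(4 * (∫ y in Set.Ioi (0 : ℝ), ∫ y' in Set.Ioi (0 : ℝ), parabolicG k q (y + y')))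
      = -(2 * (2 * Complex.I * (q : ℂ) / ((Real.pi : ℂ) * k)) ^ ((1 : ℂ) / 2)) := by
  have hπ := Real.pi_pos
  have hπ0 : ((Real.pi : ℝ) : ℂ) ≠ 0 := Complex.ofReal_ne_zero.mpr hπ.ne'
  have hq0 : ((q : ℝ) : ℂ) ≠ 0 := Complex.ofReal_ne_zero.mpr hq.ne'
  have hk0 : k ≠ 0 := fun h => by simp [h] at hk
  set a : ℂ := -(Complex.I * k) / (2 * (q : ℂ)) with ha_def
  have ha : 0 < a.re := by
    have e : a = (((1 / (2*q) : ℝ)) : ℂ) * (-(Complex.I * k)) := by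
      rw [ha_def]; push_cast; field_simp
    rw [e, Complex.re_ofReal_mul]
    have : (-(Complex.I * k)).re = k.im := by simp
    rw [this]
    positivity
  have ha0 : a ≠ 0 := fun h => by simp [h] at ha
  set z : ℂ := k / (2 * (Real.pi : ℂ) * Complex.I * (q : ℂ)) with hz_def
  have haz : a = (Real.pi : ℂ) * z := by
    rw [ha_def, hz_def]
    field_simp [Complex.I_ne_zero]
    ring_nf
    simp [Complex.I_sq]
  have hz_re : 0 < z.re := by
    have : a.re = Real.pi * z.re := by rw [haz, Complex.re_ofReal_mul]
    nlinarith
  have hz0 : z ≠ 0 := fun h => by simp [h] at hz_re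
  set w : ℂ := 2 * Complex.I * (q : ℂ) / ((Real.pi : ℂ) * k) with hw_def
  have hw : w = (((Real.pi : ℂ))^2 * z)⁻¹ := by
    rw [hw_def, hz_def]
    field_simp [Complex.I_ne_zero]
  have hw_re : 0 < w.re := by
    have e : w = ((((Real.pi^2)⁻¹ : ℝ)) : ℂ) * z⁻¹ := by rw [hw]; push_cast; rw [mul_inv]
    rw [e, Complex.re_ofReal_mul, Complex.inv_re]
    have hns : 0 < Complex.normSq z := Complex.normSq_pos.mpr hz0
    positivity
  have hw0 : w ≠ 0 := fun h => by simp [h] at hw_re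
  -- the double integral
  have hinner : ∀ y : ℝ, (∫ y' in Set.Ioi (0:ℝ), parabolicG k q (y + y'))
      = z ^ ((1:ℂ)/2) * ∫ u in Set.Ioi y, Complex.exp (-a * (u:ℂ)^2) := by
    intro y
    have hpt : ∀ y' : ℝ, parabolicG k q (y + y')
        = z ^ ((1:ℂ)/2) * Complex.exp (-a * (((y + y' : ℝ)) : ℂ)^2) := by
      intro y'
      unfold parabolicG
      rw [← hz_def]
      congr 2
      rw [ha_def]
      field_simp
    simp_rw [hpt]
    rw [MeasureTheory.integral_const_mul]
    congr 1
    exact MonopoleAux.shift_integral (fun u : ℝ => Complex.exp (-a * (u:ℂ)^2)) y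
  have hdouble : (∫ y in Set.Ioi (0:ℝ), ∫ y' in Set.Ioi (0:ℝ), parabolicG k q (y + y'))
      = z ^ ((1:ℂ)/2) * (2*a)⁻¹ := by
    simp_rw [hinner]
    rw [MeasureTheory.integral_const_mul, MonopoleAux.gauss_tail ha]
  rw [hdouble]
  -- now pure algebra with principal square roots
  have hs_re : 0 < (z ^ ((1:ℂ)/2)).re := re_cpow_half_pos hz_re
  have hs0 : z ^ ((1:ℂ)/2) ≠ 0 := fun h => by rw [h] at hs_re; simp at hs_re
  have ht_re : 0 < (w ^ ((1:ℂ)/2)).re := re_cpow_half_pos hw_re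
  have hC2 : z ^ ((1:ℂ)/2) * z ^ ((1:ℂ)/2) = z := by
    rw [← Complex.cpow_add _ _ hz0]
    norm_num
  have hw2 : w ^ ((1:ℂ)/2) * w ^ ((1:ℂ)/2) = w := by
    rw [← Complex.cpow_add _ _ hw0]
    norm_num
  set u : ℂ := 4 * (z ^ ((1:ℂ)/2) * (2*a)⁻¹) with hu_def
  set v : ℂ := 2 * w ^ ((1:ℂ)/2) with hv_def
  have hu2 : u^2 = 4 / (((Real.pi : ℂ))^2 * z) := by
    have e : u^2 = 16 * (z ^ ((1:ℂ)/2) * z ^ ((1:ℂ)/2)) * ((2*a)*(2*a))⁻¹ := by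
      rw [hu_def]; ring
    rw [e, hC2, haz]
    field_simp
    ring
  have hv2 : v^2 = 4 / (((Real.pi : ℂ))^2 * z) := by
    have e : v^2 = 4 * (w ^ ((1:ℂ)/2) * w ^ ((1:ℂ)/2)) := by rw [hv_def]; ring
    rw [e, hw2, hw]
    field_simp
  have hu_re : 0 < u.re := by
    have hπz : ((Real.pi : ℂ)) * z ≠ 0 := mul_ne_zero hπ0 hz0
    have hne : ((Real.pi : ℂ)) * z ^ ((1:ℂ)/2) ≠ 0 := mul_ne_zero hπ0 hs0
    have key : u * (((Real.pi : ℂ)) * z ^ ((1:ℂ)/2)) = 2 := by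
      rw [hu_def, haz]
      field_simp
      linear_combination 4 * hC2
    have e : u = 2 * (((Real.pi : ℂ)) * z ^ ((1:ℂ)/2))⁻¹ := by
      field_simp at key ⊢
      linear_combination key
    have e2 : u = ((((Real.pi)⁻¹ : ℝ)) : ℂ) * (2 * (z ^ ((1:ℂ)/2))⁻¹) := by
      rw [e, mul_inv]
      push_cast
      ring
    rw [e2, Complex.re_ofReal_mul]
    rw [show ((2:ℂ) * (z ^ ((1:ℂ)/2))⁻¹).re = 2 * ((z ^ ((1:ℂ)/2))⁻¹).re by simp [Complex.mul_re]]
    rw [Complex.inv_re]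
    have hns : 0 < Complex.normSq (z ^ ((1:ℂ)/2)) := Complex.normSq_pos.mpr hs0
    positivity
  have hv_re : 0 < v.re := by
    have e : v.re = 2 * (w ^ ((1:ℂ)/2)).re := by
      rw [hv_def]; simp [Complex.mul_re]
    rw [e]; positivity
  have huv : u = v := by
    have hsq : u^2 = v^2 := hu2.trans hv2.symm
    have hdiff : (u - v) * (u + v) = 0 := by linear_combination hsq
    rcases mul_eq_zero.mp hdiff with h | h
    · exact sub_eq_zero.mp h
    · exfalso
      have := congrArg Complex.re h
      simp only [Complex.add_re, Complex.zero_re] at this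
      linarith
  exact ⟨huv, by rw [huv]⟩

end MonopoleAuxSection
end
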